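/- Let S₀ and S₁ be disjoint stationary subsets of ω₁, and let Q be the disjoint sum of the club-shooting posets P_{S₀} and P_{S₁}. Then Q is not strongly proper on a stationary set: for every countable N ≺ H(χ) containing the relevant parameters, there is i ∈ {0,1} such that the condition (i, ∅) has no strongly N-generic extension. -/

import Mathlib

open FirstOrder

/-- The relations of the language of set theory: a single binary relation `mem`. -/
inductive memRel : ℕ → Type
  | mem : memRel 2

/-- The language of set theory. -/
def memLang : FirstOrder.Language := ⟨fun _ => Empty, memRel⟩

/-- The ∈-structure on (the subtype of) the elements of a set `A`. -/
def memStruct (A : ZFSet) : memLang.Structure {x : ZFSet // x ∈ A} where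
  funMap := fun f _ => Empty.elim f
  RelMap | .mem => fun x => (x 0).1 ∈ (x 1).1

/-- `N` is an elementary substructure of `(A, ∈)`: `N ⊆ A` and every first-order
formula of the language of set theory with parameters from `N` holds in `(N, ∈)`
iff it holds in `(A, ∈)`. -/
def ElemSub (N A : ZFSet) : Prop :=
  N ⊆ A ∧ ∀ (n : ℕ) (φ : memLang.Formula (Fin n)) (v : Fin n → {x : ZFSet // x ∈ A})
    (hv : ∀ i, (v i).1 ∈ N),
    (letI := memStruct N
     φ.Realize (fun i => (⟨(v i).1, hv i⟩ : {x : ZFSet // x ∈ N}))) ↔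
    (letI := memStruct A
     φ.Realize v)

/-- Intersection of two ZF-sets. -/
noncomputable def zinter (a b : ZFSet) : ZFSet := ZFSet.sep (fun y => y ∈ b) a

/-- `x` is a (von Neumann) ordinal: a transitive set of transitive sets. -/
def IsOrd (x : ZFSet) : Prop := x.IsTransitive ∧ ∀ y ∈ x, ZFSet.IsTransitive y

/-- `b` is countable in the transitive set `W`: some surjection from `ω` onto `b`
(coded as a set of ordered pairs) belongs to `W`. -/
def CountableIn (W b : ZFSet) : Prop :=
  ∃ f, f ∈ W ∧ (∀ z ∈ f, ∃ n ∈ ZFSet.omega, ∃ y ∈ b, z = ZFSet.pair n y) ∧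
    (∀ n y y', ZFSet.pair n y ∈ f → ZFSet.pair n y' ∈ f → y = y') ∧
    ∀ y ∈ b, ∃ n ∈ ZFSet.omega, ZFSet.pair n y ∈ f

/-- `C ⊆ κ` is club in `κ`: unbounded and closed. -/
def ClubIn (kappa C : ZFSet) : Prop :=
  C ⊆ kappa ∧ (∀ α ∈ kappa, ∃ β ∈ C, α ∈ β) ∧
    ∀ α ∈ kappa, zinter C α ≠ ∅ → ZFSet.sUnion (zinter C α) = α → α ∈ C

/-- `S` is a stationary subset of `κ`: it meets every club subset of `κ`. -/
def StationaryIn (kappa S : ZFSet) : Prop :=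
  S ⊆ kappa ∧ ∀ C, ClubIn kappa C → zinter C S ≠ ∅

/-- `p` is a condition of the Abraham–Shelah club-shooting poset `P_S`. -/
def IsPS (omega1 S p : ZFSet) : Prop :=
  p.toSet.Finite ∧
    (∀ z ∈ p, ∃ α ∈ S, ∃ β ∈ omega1, (α ∈ β ∨ α = β) ∧ z = ZFSet.pair α β) ∧
    ∀ α β α' β' : ZFSet, ZFSet.pair α β ∈ p → ZFSet.pair α' β' ∈ p →
      ¬ (α ∈ α' ∧ (α' ∈ β ∨ α' = β))

/-- `q` is a condition of `Q`, the disjoint sum of `P_{S₀}` and `P_{S₁}`: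
a pair `(i, p)` with `i ∈ {0, 1}` and `p ∈ P_{S_i}`. -/
def IsQ (omega1 S₀ S₁ q : ZFSet) : Prop :=
  ∃ p : ZFSet, (q = ZFSet.pair ∅ p ∧ IsPS omega1 S₀ p) ∨
    (q = ZFSet.pair {∅} p ∧ IsPS omega1 S₁ p)

/-- The order of `Q`: `(j,q) ≤ (i,p)` iff `i = j` and `p ⊆ q`. -/
def QleQ (q' q : ZFSet) : Prop :=
  ∃ i p p' : ZFSet, q = ZFSet.pair i p ∧ q' = ZFSet.pair i p' ∧ p ⊆ p'

/-- Compatibility in `Q`. -/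
def QCompat (omega1 S₀ S₁ a b : ZFSet) : Prop :=
  ∃ r, IsQ omega1 S₀ S₁ r ∧ QleQ r a ∧ QleQ r b

/-- `q` is a strongly `(N, Q)`-generic condition: every set `D` dense in the
subposet `N ∩ Q` is predense below `q`. -/
def StronglyGenericQ (omega1 S₀ S₁ N q : ZFSet) : Prop :=
  ∀ D : Set ZFSet, (∀ d ∈ D, IsQ omega1 S₀ S₁ d ∧ d ∈ N) →
    (∀ p, IsQ omega1 S₀ S₁ p → p ∈ N → ∃ d ∈ D, QleQ d p) →
    ∀ r, IsQ omega1 S₀ S₁ r → QleQ r q → ∃ d ∈ D, QCompat omega1 S₀ S₁ r d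

set_option linter.unusedSectionVars false

lemma ZFSet.toSet_insert (x y : ZFSet) : (insert x y).toSet = insert x y.toSet := ZFSet.coe_insert x y

lemma ZFSet.toSet_empty : (∅ : ZFSet).toSet = ∅ := ZFSet.coe_empty

lemma ZFSet.toSet_union (x y : ZFSet) : (x ∪ y).toSet = x.toSet ∪ y.toSet := ZFSet.coe_union x y

namespace Stmt17

open ZFSet

lemma zinter_mem {a b x : ZFSet} : x ∈ zinter a b ↔ x ∈ a ∧ x ∈ b := ZFSet.mem_sep

lemma ord_mem {x y : ZFSet} (hx : IsOrd x) (hy : y ∈ x) : IsOrd y :=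
  ⟨hx.2 y hy, fun z hz => hx.2 z (hx.1 y hy hz)⟩

theorem ord_tri : ∀ x y : ZFSet, IsOrd x → IsOrd y → x ∈ y ∨ x = y ∨ y ∈ x := by
  intro x
  induction x using ZFSet.inductionOn with
  | _ x IHx =>
  intro y
  induction y using ZFSet.inductionOn with
  | _ y IHy =>
  intro hx hy
  by_cases hxy : x ∈ y
  · exact Or.inl hxy
  by_cases hyx : y ∈ x
  · exact Or.inr (Or.inr hyx)
  refine Or.inr (Or.inl (ZFSet.ext fun z => ⟨fun hz => ?_, fun hz => ?_⟩))
  · rcases IHx z hz y (ord_mem hx hz) hy with h | h | h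
    · exact h
    · exact absurd (h ▸ hz) hyx
    · exact absurd (hx.1 z hz h) hyx
  · rcases IHy z hz hx (ord_mem hy hz) with h | h | h
    · exact absurd (hy.1 z hz h) hxy
    · exact absurd (h ▸ hz) hxy
    · exact h

/-- no 2-cycles through a transitive set -/
lemma mem3_asymm {a b c : ZFSet} (hc : c.IsTransitive) (h1 : a ∈ b) (h2 : b ∈ c)
    (h3 : c ∈ a) : False :=
  ZFSet.mem_asymm (hc b h2 h1) h3

/-- `a ≤ b` for sets -/
def zle (a b : ZFSet) : Prop := a ∈ b ∨ a = b

lemma mem_of_mem_zle {t a b : ZFSet} (hb : b.IsTransitive) (h1 : t ∈ a) (h2 : zle a b) :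
    t ∈ b := by
  rcases h2 with h | rfl
  · exact hb a h h1
  · exact h1

def zsucc (x : ZFSet) : ZFSet := insert x x

lemma mem_zsucc {x y : ZFSet} : y ∈ zsucc x ↔ y = x ∨ y ∈ x := ZFSet.mem_insert_iff

lemma ord_zsucc {x : ZFSet} (hx : IsOrd x) : IsOrd (zsucc x) := by
  constructor
  · intro y hy z hz
    rcases mem_zsucc.1 hy with rfl | hy
    · exact mem_zsucc.2 (Or.inr hz)
    · exact mem_zsucc.2 (Or.inr (hx.1 y hy hz))
  · intro y hy
    rcases mem_zsucc.1 hy with rfl | hy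
    · exact hx.1
    · exact hx.2 y hy

section Omega1

variable {omega1 : ZFSet} (hω1 : IsOrd omega1)
  (hω1unc : ¬ omega1.toSet.Countable)
  (hω1least : ∀ α ∈ omega1, ZFSet.toSet α |>.Countable)

include hω1 hω1unc hω1least

lemma ord_of_mem_omega1 {x : ZFSet} (hx : x ∈ omega1) : IsOrd x := ord_mem hω1 hx

lemma zsucc_mem_omega1 {x : ZFSet} (hx : x ∈ omega1) : zsucc x ∈ omega1 := by
  have hxo : IsOrd x := ord_mem hω1 hx
  have hso : IsOrd (zsucc x) := ord_zsucc hxo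
  have hcnt : (zsucc x).toSet.Countable := by
    have := hω1least x hx
    rw [zsucc, ZFSet.toSet_insert]
    exact Set.Countable.insert _ this
  rcases ord_tri (zsucc x) omega1 hso hω1 with h | h | h
  · exact h
  · exact absurd (h ▸ hcnt) hω1unc
  · -- omega1 ∈ zsucc x : omega1 = x or omega1 ∈ x, both make omega1 countable
    rcases mem_zsucc.1 h with heq | h'
    · exact absurd (by rw [heq]; exact hω1least x hx) hω1unc
    · have : omega1.toSet ⊆ x.toSet := fun z hz => hxo.1 omega1 h' hz
      exact absurd ((hω1least x hx).mono this) hω1unc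

lemma omega1_nonempty : ∃ y, y ∈ omega1 := by
  by_contra h
  push_neg at h
  have : omega1.toSet = ∅ := Set.eq_empty_iff_forall_notMem.2 fun y hy => h y hy
  exact hω1unc (this ▸ Set.countable_empty)

/-- finite sets of elements of `omega1` have strict upper bounds in `omega1` -/
lemma finite_ub {T : Set ZFSet} (hT : T.Finite) (hsub : ∀ x ∈ T, x ∈ omega1) :
    ∃ m ∈ omega1, ∀ x ∈ T, x ∈ m := by
  classical
  revert hsub
  refine Set.Finite.induction_on
    (motive := fun T _ => (∀ x ∈ T, x ∈ omega1) → ∃ m ∈ omega1, ∀ x ∈ T, x ∈ m) T hT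
    (fun _ => (omega1_nonempty hω1 hω1unc hω1least).imp fun m hm => ⟨hm, by simp⟩) ?_
  intro a T ha hTf IH hsub
  obtain ⟨m, hm, hub⟩ := IH fun x hx => hsub x (Set.mem_insert_of_mem _ hx)
  have haω : a ∈ omega1 := hsub a (Set.mem_insert _ _)
  rcases ord_tri a m (ord_mem hω1 haω) (ord_mem hω1 hm) with h | rfl | h
  · refine ⟨zsucc m, zsucc_mem_omega1 hω1 hω1unc hω1least hm, fun x hx => ?_⟩
    rcases Set.mem_insert_iff.1 hx with rfl | hx
    · exact mem_zsucc.2 (Or.inr h)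
    · exact mem_zsucc.2 (Or.inr (hub x hx))
  · refine ⟨zsucc a, zsucc_mem_omega1 hω1 hω1unc hω1least hm, fun x hx => ?_⟩
    rcases Set.mem_insert_iff.1 hx with rfl | hx
    · exact mem_zsucc.2 (Or.inl rfl)
    · exact mem_zsucc.2 (Or.inr (hub x hx))
  · refine ⟨zsucc a, zsucc_mem_omega1 hω1 hω1unc hω1least haω, fun x hx => ?_⟩
    rcases Set.mem_insert_iff.1 hx with rfl | hx
    · exact mem_zsucc.2 (Or.inl rfl)
    · exact mem_zsucc.2 (Or.inr ((ord_mem hω1 haω).1 m h (hub x hx)))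

/-- stationary sets are unbounded -/
lemma stat_unbounded {S : ZFSet} (hS : StationaryIn omega1 S) {ξ : ZFSet} (hξ : ξ ∈ omega1) :
    ∃ c ∈ S, ξ ∈ c := by
  classical
  set C : ZFSet := ZFSet.sep (fun β => ξ ∈ β) omega1 with hC
  have hmemC : ∀ {β}, β ∈ C ↔ β ∈ omega1 ∧ ξ ∈ β := fun {β} => ZFSet.mem_sep
  have hclub : ClubIn omega1 C := by
    refine ⟨fun β hβ => (hmemC.1 hβ).1, fun α hα => ?_, fun α hα hne hsup => ?_⟩
    · -- unbounded: β := zsucc (max ξ α)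
      obtain ⟨m, hm, hub⟩ := finite_ub hω1 hω1unc hω1least
        (T := {ξ, α}) ((Set.finite_singleton _).insert _)
        (by rintro x (rfl | rfl) <;> assumption)
      refine ⟨m, hmemC.2 ⟨hm, hub ξ (by simp)⟩, hub α (by simp)⟩
    · -- closed
      obtain ⟨β, hβ⟩ : ∃ β, β ∈ zinter C α := by
        by_contra h
        push_neg at h
        exact hne ((ZFSet.eq_empty _).2 h)
      obtain ⟨hβC, hβα⟩ := zinter_mem.1 hβ
      exact hmemC.2 ⟨hα, (ord_mem hω1 hα).1 β hβα (hmemC.1 hβC).2⟩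
  have := hS.2 C hclub
  obtain ⟨c, hc⟩ : ∃ c, c ∈ zinter C S := by
    by_contra h
    push_neg at h
    exact this ((ZFSet.eq_empty _).2 h)
  obtain ⟨hcC, hcS⟩ := zinter_mem.1 hc
  exact ⟨c, hcS, (hmemC.1 hcC).2⟩

end Omega1

end Stmt17
namespace Stmt17

open ZFSet FirstOrder FirstOrder.Language

attribute [local instance] memStruct

abbrev Mv (A : ZFSet) := {x : ZFSet // x ∈ A}

/-- the membership atomic formula -/
def mf {k n : ℕ} (t u : Fin k ⊕ Fin n) : memLang.BoundedFormula (Fin k) n :=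
  Relations.boundedFormula₂ memRel.mem (Term.var t) (Term.var u)

/-- the equality atomic formula -/
def eqf {k n : ℕ} (t u : Fin k ⊕ Fin n) : memLang.BoundedFormula (Fin k) n :=
  Term.bdEqual (Term.var t) (Term.var u)

@[simp] lemma realize_mf {A : ZFSet} {k n : ℕ} {t u : Fin k ⊕ Fin n}
    {v : Fin k → Mv A} {xs : Fin n → Mv A} :
    (mf t u).Realize v xs ↔ (Sum.elim v xs t).1 ∈ (Sum.elim v xs u).1 := by
  simp only [mf, BoundedFormula.realize_rel₂, Term.realize_var]
  rfl

@[simp] lemma realize_eqf {A : ZFSet} {k n : ℕ} {t u : Fin k ⊕ Fin n}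
    {v : Fin k → Mv A} {xs : Fin n → Mv A} :
    (eqf t u).Realize v xs ↔ (Sum.elim v xs t).1 = (Sum.elim v xs u).1 := by
  simp only [eqf, BoundedFormula.realize_bdEqual, Term.realize_var]
  exact Subtype.ext_iff

/-- existential quantification over the last free variable -/
def exL {k : ℕ} (ψ : memLang.Formula (Fin (k+1))) : memLang.Formula (Fin k) :=
  (BoundedFormula.relabel
    (fun j : Fin (k+1) =>
      if h : (j : ℕ) < k then Sum.inl (⟨j, h⟩ : Fin k) else Sum.inr (0 : Fin 1)) ψ).ex

lemma realize_exL {A : ZFSet} {k : ℕ} (ψ : memLang.Formula (Fin (k+1))) (v : Fin k → Mv A) :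
    (exL ψ).Realize v ↔ ∃ a : Mv A, ψ.Realize (Fin.snoc v a) := by
  rw [exL, Formula.Realize, BoundedFormula.realize_ex]
  refine exists_congr fun a => ?_
  rw [BoundedFormula.realize_relabel]
  have h2 : ((Fin.snoc (default : Fin 0 → Mv A) a : Fin 1 → Mv A) ∘ Fin.natAdd 1 : Fin 0 → Mv A)
      = default := funext fun i => i.elim0
  have h1 : (Sum.elim v ((Fin.snoc (default : Fin 0 → Mv A) a : Fin 1 → Mv A) ∘ Fin.castAdd 0) ∘
      (fun j : Fin (k+1) =>
        if h : (j : ℕ) < k then Sum.inl (⟨j, h⟩ : Fin k) else Sum.inr (0 : Fin 1)))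
      = Fin.snoc v a := by
    funext j
    by_cases h : (j : ℕ) < k
    · simp only [Function.comp_apply, dif_pos h, Sum.elim_inl, Fin.snoc, h, dif_pos]
      rfl
    · simp only [Function.comp_apply, dif_neg h, Sum.elim_inr, Fin.snoc, h, dif_neg]
      rfl
  rw [h1, h2]
  rfl

end Stmt17
namespace Stmt17

open ZFSet FirstOrder FirstOrder.Language

attribute [local instance] memStruct

/-- "v0 is empty" -/
def femp : memLang.Formula (Fin 1) :=
  ((mf (Sum.inr 0) (Sum.inl 0)).not).all

lemma realize_femp {A : ZFSet} (v : Fin 1 → Mv A) :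
    femp.Realize v ↔ ∀ w : Mv A, w.1 ∉ (v 0).1 := by
  simp [femp, Formula.Realize, BoundedFormula.realize_all, BoundedFormula.realize_not,
    Fin.snoc]

/-- "v2 = {v0, v1}" -/
def fupair : memLang.Formula (Fin 3) :=
  (((mf (Sum.inr 0) (Sum.inl 2)).iff
    ((eqf (Sum.inr 0) (Sum.inl 0)) ⊔ (eqf (Sum.inr 0) (Sum.inl 1)))).all)

lemma realize_fupair {A : ZFSet} (v : Fin 3 → Mv A) :
    fupair.Realize v ↔
      ∀ w : Mv A, (w.1 ∈ (v 2).1 ↔ (w.1 = (v 0).1 ∨ w.1 = (v 1).1)) := by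
  simp [fupair, Formula.Realize, BoundedFormula.realize_all, BoundedFormula.realize_iff,
    BoundedFormula.realize_sup, Fin.snoc]

/-- "v2 = v0 ∪ v1" -/
def funionf : memLang.Formula (Fin 3) :=
  (((mf (Sum.inr 0) (Sum.inl 2)).iff
    ((mf (Sum.inr 0) (Sum.inl 0)) ⊔ (mf (Sum.inr 0) (Sum.inl 1)))).all)

lemma realize_funionf {A : ZFSet} (v : Fin 3 → Mv A) :
    funionf.Realize v ↔
      ∀ w : Mv A, (w.1 ∈ (v 2).1 ↔ (w.1 ∈ (v 0).1 ∨ w.1 ∈ (v 1).1)) := by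
  simp [funionf, Formula.Realize, BoundedFormula.realize_all, BoundedFormula.realize_iff,
    BoundedFormula.realize_sup, Fin.snoc]

/-- "v0 = ⟨v1, v2⟩" (Kuratowski pair) -/
def fpairK : memLang.Formula (Fin 3) :=
  (((mf (Sum.inr 0) (Sum.inl 0)).iff
    ((((mf (Sum.inr 1) (Sum.inr 0)).iff (eqf (Sum.inr 1) (Sum.inl 1))).all) ⊔
     (((mf (Sum.inr 1) (Sum.inr 0)).iff
        ((eqf (Sum.inr 1) (Sum.inl 1)) ⊔ (eqf (Sum.inr 1) (Sum.inl 2)))).all))).all)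

lemma realize_fpairK {A : ZFSet} (v : Fin 3 → Mv A) :
    fpairK.Realize v ↔
      ∀ w : Mv A, (w.1 ∈ (v 0).1 ↔
        ((∀ u : Mv A, u.1 ∈ w.1 ↔ u.1 = (v 1).1) ∨
         (∀ u : Mv A, u.1 ∈ w.1 ↔ (u.1 = (v 1).1 ∨ u.1 = (v 2).1)))) := by
  simp [fpairK, Formula.Realize, BoundedFormula.realize_all, BoundedFormula.realize_iff,
    BoundedFormula.realize_sup, Fin.snoc]

/-- "v3 ∈ v0 ∧ v1 ∈ v3 ∧ ∀ z ∈ v2, ∀ w ∈ z, ∀ u ∈ w, u ∈ v3" -/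
def fabove : memLang.Formula (Fin 4) :=
  (mf (Sum.inl 3) (Sum.inl 0)) ⊓ ((mf (Sum.inl 1) (Sum.inl 3)) ⊓
    ((mf (Sum.inr 0) (Sum.inl 2)).imp
      ((mf (Sum.inr 1) (Sum.inr 0)).imp
        ((mf (Sum.inr 2) (Sum.inr 1)).imp (mf (Sum.inr 2) (Sum.inl 3))).all).all).all)

lemma realize_fabove {A : ZFSet} (v : Fin 4 → Mv A) :
    fabove.Realize v ↔
      ((v 3).1 ∈ (v 0).1 ∧ (v 1).1 ∈ (v 3).1 ∧
        ∀ z : Mv A, z.1 ∈ (v 2).1 → ∀ w : Mv A, w.1 ∈ z.1 →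
          ∀ u : Mv A, u.1 ∈ w.1 → u.1 ∈ (v 3).1) := by
  simp [fabove, Formula.Realize, BoundedFormula.realize_all, BoundedFormula.realize_imp,
    BoundedFormula.realize_inf, Fin.snoc]

end Stmt17
namespace Stmt17

open ZFSet FirstOrder FirstOrder.Language

attribute [local instance] memStruct

section Transfer

variable {χ : Cardinal.{1}} {Hχ N : ZFSet}

lemma Htrans (hHχ : ∀ x : ZFSet, x ∈ Hχ ↔
      ∃ t : ZFSet, t.IsTransitive ∧ x ⊆ t ∧ Cardinal.mk t.toSet < χ)
    {x : ZFSet} (hx : x ∈ Hχ) {y : ZFSet} (hy : y ∈ x) : y ∈ Hχ := by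
  obtain ⟨t, ht, hsub, hcard⟩ := (hHχ x).1 hx
  exact (hHχ y).2 ⟨t, ht, ht y (hsub hy), hcard⟩

variable (hχ : Cardinal.aleph0 < χ)
  (hHχ : ∀ x : ZFSet, x ∈ Hχ ↔
      ∃ t : ZFSet, t.IsTransitive ∧ x ⊆ t ∧ Cardinal.mk t.toSet < χ)

include hχ hHχ

lemma Hempty : ∅ ∈ Hχ := by
  refine (hHχ ∅).2 ⟨∅, ZFSet.isTransitive_empty, fun y hy => hy, ?_⟩
  rw [ZFSet.toSet_empty, Cardinal.mk_emptyCollection]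
  exact Cardinal.aleph0_pos.trans hχ

lemma Hupair {x y : ZFSet} (hx : x ∈ Hχ) (hy : y ∈ Hχ) : ({x, y} : ZFSet) ∈ Hχ := by
  obtain ⟨t, ht, hsub, hcard⟩ := (hHχ x).1 hx
  obtain ⟨t', ht', hsub', hcard'⟩ := (hHχ y).1 hy
  refine (hHχ _).2 ⟨t ∪ t' ∪ ({x, y} : ZFSet), ?_, ?_, ?_⟩
  · intro w hw z hz
    rcases ZFSet.mem_union.1 hw with hw | hw
    · rcases ZFSet.mem_union.1 hw with hw | hw
      · exact ZFSet.mem_union.2 (Or.inl (ZFSet.mem_union.2 (Or.inl (ht w hw hz))))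
      · exact ZFSet.mem_union.2 (Or.inl (ZFSet.mem_union.2 (Or.inr (ht' w hw hz))))
    · rcases ZFSet.mem_pair.1 hw with rfl | rfl
      · exact ZFSet.mem_union.2 (Or.inl (ZFSet.mem_union.2 (Or.inl (hsub hz))))
      · exact ZFSet.mem_union.2 (Or.inl (ZFSet.mem_union.2 (Or.inr (hsub' hz))))
  · intro w hw
    exact ZFSet.mem_union.2 (Or.inr hw)
  · rw [ZFSet.toSet_union, ZFSet.toSet_union]
    refine lt_of_le_of_lt (Cardinal.mk_union_le _ _) ?_
    refine Cardinal.add_lt_of_lt hχ.le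
      (lt_of_le_of_lt (Cardinal.mk_union_le _ _) (Cardinal.add_lt_of_lt hχ.le hcard hcard')) ?_
    refine lt_trans ?_ hχ
    refine Set.Finite.lt_aleph0 ?_
    have : ({x, y} : ZFSet).toSet ⊆ {x, y} := by
      intro w hw
      rcases ZFSet.mem_pair.1 hw with rfl | rfl <;> simp
    exact ((Set.finite_singleton y).insert x).subset this

lemma Hunion {x y : ZFSet} (hx : x ∈ Hχ) (hy : y ∈ Hχ) : x ∪ y ∈ Hχ := by
  obtain ⟨t, ht, hsub, hcard⟩ := (hHχ x).1 hx
  obtain ⟨t', ht', hsub', hcard'⟩ := (hHχ y).1 hy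
  refine (hHχ _).2 ⟨t ∪ t', ht.union ht', ?_, ?_⟩
  · intro w hw
    rcases ZFSet.mem_union.1 hw with hw | hw
    · exact ZFSet.mem_union.2 (Or.inl (hsub hw))
    · exact ZFSet.mem_union.2 (Or.inr (hsub' hw))
  · rw [ZFSet.toSet_union]
    exact lt_of_le_of_lt (Cardinal.mk_union_le _ _) (Cardinal.add_lt_of_lt hχ.le hcard hcard')

end Transfer

section NTransfer

variable {χ : Cardinal.{1}} {Hχ N : ZFSet}

/-- transfer a formula with parameters from `N` between `N` and `Hχ` -/
lemma transferIff (hN : ElemSub N Hχ) {n : ℕ} (φ : memLang.Formula (Fin n))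
    (v : Fin n → Mv N) :
    φ.Realize v ↔ φ.Realize (fun i => (⟨(v i).1, hN.1 (v i).2⟩ : Mv Hχ)) := by
  have hv : ∀ i, ((fun i => (⟨(v i).1, hN.1 (v i).2⟩ : Mv Hχ)) i).1 ∈ N := fun i => (v i).2
  have h := hN.2 n φ _ hv
  have he : (fun i => (⟨((fun i => (⟨(v i).1, hN.1 (v i).2⟩ : Mv Hχ)) i).1, hv i⟩ : Mv N)) = v :=
    funext fun i => Subtype.ext rfl
  rw [he] at h
  exact h

end NTransfer

end Stmt17
namespace Stmt17

open ZFSet FirstOrder FirstOrder.Language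

attribute [local instance] memStruct

section Abs

variable {A : ZFSet} (htr : ∀ x ∈ A, ∀ y ∈ x, y ∈ A)

include htr

lemma femp_absH (v : Fin 1 → Mv A) : femp.Realize v ↔ (v 0).1 = ∅ := by
  rw [realize_femp]
  constructor
  · intro h
    rw [ZFSet.eq_empty]
    intro w hw
    exact h ⟨w, htr _ (v 0).2 _ hw⟩ hw
  · rintro h w
    rw [h]
    exact ZFSet.notMem_empty _

lemma fupair_absH (v : Fin 3 → Mv A) :
    fupair.Realize v ↔ (v 2).1 = ({(v 0).1, (v 1).1} : ZFSet) := by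
  rw [realize_fupair]
  constructor
  · intro h
    apply ZFSet.ext
    intro w
    constructor
    · intro hw
      exact ZFSet.mem_pair.2 ((h ⟨w, htr _ (v 2).2 _ hw⟩).1 hw)
    · intro hw
      rcases ZFSet.mem_pair.1 hw with rfl | rfl
      · exact (h (v 0)).2 (Or.inl rfl)
      · exact (h (v 1)).2 (Or.inr rfl)
  · rintro h w
    rw [h, ZFSet.mem_pair]

lemma funionf_absH (v : Fin 3 → Mv A) :
    funionf.Realize v ↔ (v 2).1 = (v 0).1 ∪ (v 1).1 := by
  rw [realize_funionf]
  constructor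
  · intro h
    apply ZFSet.ext
    intro w
    constructor
    · intro hw
      exact ZFSet.mem_union.2 ((h ⟨w, htr _ (v 2).2 _ hw⟩).1 hw)
    · intro hw
      rcases ZFSet.mem_union.1 hw with hw' | hw'
      · exact (h ⟨w, htr _ (v 0).2 _ hw'⟩).2 (Or.inl hw')
      · exact (h ⟨w, htr _ (v 1).2 _ hw'⟩).2 (Or.inr hw')
  · rintro h w
    rw [h, ZFSet.mem_union]

lemma fpairK_absH (hcl : ∀ a b : ZFSet, a ∈ A → b ∈ A → ({a, b} : ZFSet) ∈ A)
    (v : Fin 3 → Mv A) :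
    fpairK.Realize v ↔ (v 0).1 = ZFSet.pair (v 1).1 (v 2).1 := by
  rw [realize_fpairK]
  have hsing : ∀ w : Mv A, (∀ u : Mv A, u.1 ∈ w.1 ↔ u.1 = (v 1).1) ↔ w.1 = ({(v 1).1} : ZFSet) := by
    intro w
    constructor
    · intro h
      apply ZFSet.ext
      intro u
      rw [ZFSet.mem_singleton]
      constructor
      · intro hu
        exact (h ⟨u, htr _ w.2 _ hu⟩).1 hu
      · rintro rfl
        exact (h (v 1)).2 rfl
    · rintro h u
      rw [h, ZFSet.mem_singleton]
  have hup : ∀ w : Mv A, (∀ u : Mv A, u.1 ∈ w.1 ↔ (u.1 = (v 1).1 ∨ u.1 = (v 2).1)) ↔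
      w.1 = ({(v 1).1, (v 2).1} : ZFSet) := by
    intro w
    constructor
    · intro h
      apply ZFSet.ext
      intro u
      rw [ZFSet.mem_pair]
      constructor
      · intro hu
        exact (h ⟨u, htr _ w.2 _ hu⟩).1 hu
      · rintro (rfl | rfl)
        · exact (h (v 1)).2 (Or.inl rfl)
        · exact (h (v 2)).2 (Or.inr rfl)
    · rintro h u
      rw [h, ZFSet.mem_pair]
  constructor
  · intro h
    apply ZFSet.ext
    intro w
    constructor
    · intro hw
      have hwA : w ∈ A := htr _ (v 0).2 _ hw
      rcases (h ⟨w, hwA⟩).1 hw with hs | hu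
      · have hw' : w = ({(v 1).1} : ZFSet) := (hsing ⟨w, hwA⟩).1 hs
        rw [hw']
        exact ZFSet.mem_pair.2 (Or.inl rfl)
      · have hw' : w = ({(v 1).1, (v 2).1} : ZFSet) := (hup ⟨w, hwA⟩).1 hu
        rw [hw']
        exact ZFSet.mem_pair.2 (Or.inr rfl)
    · intro hw
      rcases ZFSet.mem_pair.1 hw with rfl | rfl
      · have hA : ({(v 1).1} : ZFSet) ∈ A := by
          have := hcl (v 1).1 (v 1).1 (v 1).2 (v 1).2
          simpa using this
        exact (h ⟨_, hA⟩).2 (Or.inl ((hsing ⟨_, hA⟩).2 rfl))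
      · have hA : ({(v 1).1, (v 2).1} : ZFSet) ∈ A := hcl _ _ (v 1).2 (v 2).2
        exact (h ⟨_, hA⟩).2 (Or.inr ((hup ⟨_, hA⟩).2 rfl))
  · intro h w
    constructor
    · intro hw
      rw [h] at hw
      rcases ZFSet.mem_pair.1 hw with h1 | h1
      · exact Or.inl ((hsing w).2 h1)
      · exact Or.inr ((hup w).2 h1)
    · intro hc
      rw [h]
      rcases hc with hs | hu
      · rw [(hsing w).1 hs]
        exact ZFSet.mem_pair.2 (Or.inl rfl)
      · rw [(hup w).1 hu]
        exact ZFSet.mem_pair.2 (Or.inr rfl)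

lemma fabove_absH (v : Fin 4 → Mv A) :
    fabove.Realize v ↔ ((v 3).1 ∈ (v 0).1 ∧ (v 1).1 ∈ (v 3).1 ∧
      ∀ z ∈ (v 2).1, ∀ w ∈ z, ∀ u ∈ w, u ∈ (v 3).1) := by
  rw [realize_fabove]
  refine and_congr Iff.rfl (and_congr Iff.rfl ?_)
  constructor
  · intro h z hz w hw u hu
    have hzA : z ∈ A := htr _ (v 2).2 _ hz
    have hwA : w ∈ A := htr _ hzA _ hw
    have huA : u ∈ A := htr _ hwA _ hu
    exact h ⟨z, hzA⟩ hz ⟨w, hwA⟩ hw ⟨u, huA⟩ hu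
  · intro h z hz w hw u hu
    exact h z.1 hz w.1 hw u.1 hu

end Abs

end Stmt17
namespace Stmt17

open ZFSet FirstOrder FirstOrder.Language

attribute [local instance] memStruct

section NClosure

variable {χ : Cardinal.{1}} {Hχ N : ZFSet}

lemma exL_extract (hN : ElemSub N Hχ) {k : ℕ} (φ : memLang.Formula (Fin (k+1)))
    (vH : Fin k → Mv Hχ) (hv : ∀ i, (vH i).1 ∈ N)
    (hH : ∃ a : Mv Hχ, φ.Realize (Fin.snoc vH a)) :
    ∃ b : Mv Hχ, b.1 ∈ N ∧ φ.Realize (Fin.snoc vH b) := by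
  have hdown := (hN.2 k (exL φ) vH hv).2 ((realize_exL φ vH).2 hH)
  rw [realize_exL] at hdown
  obtain ⟨a, ha⟩ := hdown
  refine ⟨⟨a.1, hN.1 a.2⟩, a.2, ?_⟩
  have hup := (transferIff hN φ (Fin.snoc (fun i => ⟨(vH i).1, hv i⟩) a)).1 ha
  have he : (fun i => (⟨((Fin.snoc (fun i => (⟨(vH i).1, hv i⟩ : Mv N)) a : Fin (k+1) → Mv N) i).1,
      hN.1 ((Fin.snoc (fun i => (⟨(vH i).1, hv i⟩ : Mv N)) a : Fin (k+1) → Mv N) i).2⟩ : Mv Hχ))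
      = Fin.snoc vH ⟨a.1, hN.1 a.2⟩ := by
    funext i
    refine Subtype.ext ?_
    by_cases h : (i : ℕ) < k
    · simp [Fin.snoc, h]
    · simp [Fin.snoc, h]
  rw [he] at hup
  exact hup

variable (hχ : Cardinal.aleph0 < χ)
  (hHχ : ∀ x : ZFSet, x ∈ Hχ ↔
      ∃ t : ZFSet, t.IsTransitive ∧ x ⊆ t ∧ Cardinal.mk t.toSet < χ)
  (hN : ElemSub N Hχ)

include hχ hHχ hN

lemma Nempty' : (∅ : ZFSet) ∈ N := by
  have htr : ∀ x ∈ Hχ, ∀ y ∈ x, y ∈ Hχ := fun x hx y hy => Htrans hHχ hx hy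
  obtain ⟨b, hbN, hb⟩ := exL_extract hN femp default (fun i => i.elim0)
    ⟨⟨∅, Hempty hχ hHχ⟩, (femp_absH htr _).2 rfl⟩
  have h2 : b.1 = ∅ := (femp_absH htr _).1 hb
  rwa [← h2]

lemma Nupair {x y : ZFSet} (hx : x ∈ N) (hy : y ∈ N) : ({x, y} : ZFSet) ∈ N := by
  have htr : ∀ x ∈ Hχ, ∀ y ∈ x, y ∈ Hχ := fun x hx y hy => Htrans hHχ hx hy
  obtain ⟨b, hbN, hb⟩ := exL_extract hN fupair ![⟨x, hN.1 hx⟩, ⟨y, hN.1 hy⟩]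
    (by intro i; fin_cases i <;> simpa)
    ⟨⟨({x, y} : ZFSet), Hupair hχ hHχ (hN.1 hx) (hN.1 hy)⟩, (fupair_absH htr _).2 rfl⟩
  have h2 : b.1 = ({x, y} : ZFSet) := (fupair_absH htr _).1 hb
  rwa [← h2]

lemma Nsingleton {x : ZFSet} (hx : x ∈ N) : ({x} : ZFSet) ∈ N := by
  have := Nupair hχ hHχ hN hx hx
  simpa using this

lemma NpairK {x y : ZFSet} (hx : x ∈ N) (hy : y ∈ N) : ZFSet.pair x y ∈ N := by
  have h1 : ({x} : ZFSet) ∈ N := Nsingleton hχ hHχ hN hx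
  have h2 : ({x, y} : ZFSet) ∈ N := Nupair hχ hHχ hN hx hy
  exact Nupair hχ hHχ hN h1 h2

lemma Nunion {x y : ZFSet} (hx : x ∈ N) (hy : y ∈ N) : x ∪ y ∈ N := by
  have htr : ∀ x ∈ Hχ, ∀ y ∈ x, y ∈ Hχ := fun x hx y hy => Htrans hHχ hx hy
  obtain ⟨b, hbN, hb⟩ := exL_extract hN funionf ![⟨x, hN.1 hx⟩, ⟨y, hN.1 hy⟩]
    (by intro i; fin_cases i <;> simpa)
    ⟨⟨x ∪ y, Hunion hχ hHχ (hN.1 hx) (hN.1 hy)⟩, (funionf_absH htr _).2 rfl⟩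
  have h2 : b.1 = x ∪ y := (funionf_absH htr _).1 hb
  rwa [← h2]

lemma Nunpair {z x y : ZFSet} (hz : z ∈ N) (hxy : z = ZFSet.pair x y) :
    x ∈ N ∧ y ∈ N := by
  have htr : ∀ x ∈ Hχ, ∀ y ∈ x, y ∈ Hχ := fun x hx y hy => Htrans hHχ hx hy
  have hcl : ∀ a b : ZFSet, a ∈ Hχ → b ∈ Hχ → ({a, b} : ZFSet) ∈ Hχ :=
    fun a b ha hb => Hupair hχ hHχ ha hb
  have hzH : z ∈ Hχ := hN.1 hz
  have hxH : x ∈ Hχ := by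
    refine htr _ (htr _ hzH ({x} : ZFSet) ?_) x (ZFSet.mem_singleton.2 rfl)
    rw [hxy]
    exact ZFSet.mem_pair.2 (Or.inl rfl)
  have hyH : y ∈ Hχ := by
    refine htr _ (htr _ hzH ({x, y} : ZFSet) ?_) y (ZFSet.mem_pair.2 (Or.inr rfl))
    rw [hxy]
    exact ZFSet.mem_pair.2 (Or.inr rfl)
  have habs : ∀ (w : Fin 3 → Mv Hχ), fpairK.Realize w ↔ (w 0).1 = ZFSet.pair (w 1).1 (w 2).1 :=
    fpairK_absH htr hcl
  obtain ⟨b, hbN, hb⟩ := exL_extract hN (exL fpairK) ![⟨z, hzH⟩]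
    (by intro i; fin_cases i; simpa)
    ⟨⟨x, hxH⟩, (realize_exL _ _).2 ⟨⟨y, hyH⟩, (habs _).2 hxy⟩⟩
  obtain ⟨c, hcN, hc⟩ := exL_extract hN fpairK (Fin.snoc ![⟨z, hzH⟩] b)
    (by
      intro i
      fin_cases i
      · exact hz
      · exact hbN)
    ((realize_exL _ _).1 hb)
  have h5 : z = ZFSet.pair b.1 c.1 := (habs _).1 hc
  obtain ⟨hx', hy'⟩ := ZFSet.pair_injective (hxy ▸ h5)
  exact ⟨hx' ▸ hbN, hy' ▸ hcN⟩

lemma Nabove {S c₀ s : ZFSet} (hS : S ∈ N) (hc0 : c₀ ∈ N) (hs : s ∈ N)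
    (hex : ∃ c, c ∈ S ∧ c₀ ∈ c ∧ ∀ z ∈ s, ∀ w ∈ z, ∀ u ∈ w, u ∈ c) :
    ∃ c, c ∈ N ∧ c ∈ S ∧ c₀ ∈ c ∧ ∀ z ∈ s, ∀ w ∈ z, ∀ u ∈ w, u ∈ c := by
  have htr : ∀ x ∈ Hχ, ∀ y ∈ x, y ∈ Hχ := fun x hx y hy => Htrans hHχ hx hy
  obtain ⟨c, hcS, hcc0, hcb⟩ := hex
  have hcH : c ∈ Hχ := htr _ (hN.1 hS) _ hcS
  obtain ⟨b, hbN, hb⟩ := exL_extract hN fabove ![⟨S, hN.1 hS⟩, ⟨c₀, hN.1 hc0⟩, ⟨s, hN.1 hs⟩]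
    (by intro i; fin_cases i <;> simpa)
    ⟨⟨c, hcH⟩, (fabove_absH htr _).2 ⟨hcS, hcc0, hcb⟩⟩
  obtain ⟨h1, h2, h3⟩ := (fabove_absH htr _).1 hb
  exact ⟨b.1, hbN, h1, h2, h3⟩

end NClosure

end Stmt17
namespace Stmt17

open ZFSet

lemma pair_mem_iff {z a b : ZFSet} : z ∈ ZFSet.pair a b ↔ (z = {a} ∨ z = {a, b}) := by
  have : ZFSet.pair a b = ({{a}, {a, b}} : ZFSet) := rfl
  rw [this, ZFSet.mem_pair]

lemma mem_fst_pair {a b : ZFSet} : ({a} : ZFSet) ∈ ZFSet.pair a b :=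
  pair_mem_iff.2 (Or.inl rfl)

lemma mem_snd_pair {a b : ZFSet} : ({a, b} : ZFSet) ∈ ZFSet.pair a b :=
  pair_mem_iff.2 (Or.inr rfl)

lemma empty_ne_sing : (∅ : ZFSet) ≠ ({∅} : ZFSet) := by
  intro h
  have : (∅ : ZFSet) ∈ ({∅} : ZFSet) := ZFSet.mem_singleton.2 rfl
  rw [← h] at this
  exact ZFSet.notMem_empty _ this

lemma PS_pair_facts {omega1 S p a b : ZFSet} (hPS : IsPS omega1 S p)
    (h : ZFSet.pair a b ∈ p) : a ∈ S ∧ b ∈ omega1 ∧ (a ∈ b ∨ a = b) := by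
  obtain ⟨α, hα, β, hβ, hle, heq⟩ := hPS.2.1 _ h
  obtain ⟨h1, h2⟩ := ZFSet.pair_injective heq
  exact ⟨h1 ▸ hα, h2 ▸ hβ, h1 ▸ h2 ▸ hle⟩

lemma field_finite {p : ZFSet} (hfin : p.toSet.Finite)
    (hwf : ∀ z ∈ p, ∃ a b : ZFSet, z = ZFSet.pair a b) :
    {u : ZFSet | ∃ z ∈ p.toSet, ∃ w ∈ z.toSet, u ∈ w}.Finite := by
  have heq : {u : ZFSet | ∃ z ∈ p.toSet, ∃ w ∈ z.toSet, u ∈ w}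
      = ⋃ z ∈ p.toSet, {u : ZFSet | ∃ w ∈ z.toSet, u ∈ w} := by
    ext u
    simp
  rw [heq]
  refine hfin.biUnion fun z hz => ?_
  obtain ⟨a, b, rfl⟩ := hwf z hz
  refine Set.Finite.subset ((Set.finite_singleton b).insert a) ?_
  rintro u ⟨w, hw, hu⟩
  have hw' : w ∈ ({{a}, {a, b}} : ZFSet) := hw
  rcases ZFSet.mem_pair.1 hw' with rfl | rfl
  · have : u = a := ZFSet.mem_singleton.1 hu
    simp [this]
  · rcases ZFSet.mem_pair.1 hu with rfl | rfl <;> simp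

section Omega1B

variable {omega1 : ZFSet} (hω1 : IsOrd omega1)
  (hω1unc : ¬ omega1.toSet.Countable)
  (hω1least : ∀ α ∈ omega1, ZFSet.toSet α |>.Countable)

include hω1 hω1unc hω1least

lemma empty_mem_omega1 : (∅ : ZFSet) ∈ omega1 := by
  have h0 : IsOrd (∅ : ZFSet) :=
    ⟨ZFSet.isTransitive_empty, fun y hy => absurd hy (ZFSet.notMem_empty y)⟩
  rcases ord_tri ∅ omega1 h0 hω1 with h | h | h
  · exact h
  · exfalso
    apply hω1unc
    rw [← h, ZFSet.toSet_empty]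
    exact Set.countable_empty
  · exact absurd h (ZFSet.notMem_empty _)

lemma bound_in_N {N : ZFSet} (hNemp : ∅ ∈ N) {P : Set ZFSet} (hP : P.Finite)
    (hPδ : ∀ b ∈ P, b ∈ ZFSet.sUnion (zinter omega1 N)) :
    ∃ γ, γ ∈ N ∧ γ ∈ omega1 ∧ ∀ b ∈ P, b ∈ γ := by
  classical
  revert hPδ
  refine Set.Finite.induction_on
    (motive := fun P _ => (∀ b ∈ P, b ∈ ZFSet.sUnion (zinter omega1 N)) →
      ∃ γ, γ ∈ N ∧ γ ∈ omega1 ∧ ∀ b ∈ P, b ∈ γ) P hP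
    (fun _ => ⟨∅, hNemp, empty_mem_omega1 hω1 hω1unc hω1least, by simp⟩) ?_
  intro b P hb hPf IH hPδ
  obtain ⟨γ, hγN, hγω, hub⟩ := IH fun x hx => hPδ x (Set.mem_insert_of_mem _ hx)
  obtain ⟨c, hc, hbc⟩ := ZFSet.mem_sUnion.1 (hPδ b (Set.mem_insert _ _))
  obtain ⟨hcω, hcN⟩ := zinter_mem.1 hc
  rcases ord_tri γ c (ord_mem hω1 hγω) (ord_mem hω1 hcω) with h | h | h
  · refine ⟨c, hcN, hcω, fun x hx => ?_⟩
    rcases Set.mem_insert_iff.1 hx with rfl | hx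
    · exact hbc
    · exact (ord_mem hω1 hcω).1 γ h (hub x hx)
  · refine ⟨γ, hγN, hγω, fun x hx => ?_⟩
    rcases Set.mem_insert_iff.1 hx with rfl | hx
    · rw [← h] at hbc
      exact hbc
    · exact hub x hx
  · refine ⟨γ, hγN, hγω, fun x hx => ?_⟩
    rcases Set.mem_insert_iff.1 hx with rfl | hx
    · exact (ord_mem hω1 hγω).1 c h hbc
    · exact hub x hx

end Omega1B

end Stmt17
namespace Stmt17

open ZFSet

lemma main_side (omega1 : ZFSet) (hω1 : IsOrd omega1)
    (hω1unc : ¬ omega1.toSet.Countable)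
    (hω1least : ∀ α ∈ omega1, ZFSet.toSet α |>.Countable)
    (S₀ S₁ : ZFSet)
    {χ : Cardinal.{1}} (hχ : Cardinal.aleph0 < χ)
    {Hχ : ZFSet}
    (hHχ : ∀ x : ZFSet, x ∈ Hχ ↔
      ∃ t : ZFSet, t.IsTransitive ∧ x ⊆ t ∧ Cardinal.mk t.toSet < χ)
    {N : ZFSet} (hNc : N.toSet.Countable) (hN : ElemSub N Hχ)
    (hω1N : omega1 ∈ N)
    (i S : ZFSet) (hiN : i ∈ N) (hSstat : StationaryIn omega1 S) (hSN : S ∈ N)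
    (hiQmk : ∀ p : ZFSet, IsPS omega1 S p → IsQ omega1 S₀ S₁ (ZFSet.pair i p))
    (hiQinv : ∀ q p : ZFSet, IsQ omega1 S₀ S₁ q → q = ZFSet.pair i p → IsPS omega1 S p)
    (hδS : ZFSet.sUnion (zinter omega1 N) ∉ S) :
    ¬ ∃ q : ZFSet, IsQ omega1 S₀ S₁ q ∧ QleQ q (ZFSet.pair i ∅) ∧
      StronglyGenericQ omega1 S₀ S₁ N q := by
  classical
  rintro ⟨q, hqQ, hqle, hSG⟩
  set δ : ZFSet := ZFSet.sUnion (zinter omega1 N) with hδdef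
  -- facts about δ
  have hδsub : ∀ x ∈ δ, x ∈ omega1 := by
    intro x hx
    obtain ⟨c, hc, hxc⟩ := ZFSet.mem_sUnion.1 hx
    exact hω1.1 c (zinter_mem.1 hc).1 hxc
  have hδord : IsOrd δ := by
    constructor
    · intro y hy z hz
      obtain ⟨c, hc, hyc⟩ := ZFSet.mem_sUnion.1 hy
      exact ZFSet.mem_sUnion.2 ⟨c, hc, (ord_mem hω1 (zinter_mem.1 hc).1).1 y hyc hz⟩
    · intro y hy
      exact hω1.2 y (hδsub y hy)
  have hNEδ : ∀ c, c ∈ omega1 → c ∈ N → c ∈ δ := by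
    intro c hcω hcN
    obtain ⟨c', hc'N, hc'ω, hcc', -⟩ := Nabove hχ hHχ hN hω1N hcN (Nempty' hχ hHχ hN)
      ⟨zsucc c, zsucc_mem_omega1 hω1 hω1unc hω1least hcω, mem_zsucc.2 (Or.inl rfl),
        fun z hz => absurd hz (ZFSet.notMem_empty _)⟩
    exact ZFSet.mem_sUnion.2 ⟨c', zinter_mem.2 ⟨hc'ω, hc'N⟩, hcc'⟩
  have hδcnt : δ.toSet.Countable := by
    have h1 : δ.toSet ⊆ ⋃ c ∈ (zinter omega1 N).toSet, c.toSet := by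
      intro x hx
      obtain ⟨c, hc, hxc⟩ := ZFSet.mem_sUnion.1 hx
      exact Set.mem_biUnion hc hxc
    refine Set.Countable.mono h1 (Set.Countable.biUnion ?_ ?_)
    · exact hNc.mono fun c hc => (zinter_mem.1 hc).2
    · intro c hc
      exact hω1least c (zinter_mem.1 hc).1
  have hδω1 : δ ∈ omega1 := by
    rcases ord_tri δ omega1 hδord hω1 with h | h | h
    · exact h
    · exact absurd (h ▸ hδcnt) hω1unc
    · exact absurd (hδsub _ h) (ZFSet.mem_irrefl _)
  -- decompose q
  obtain ⟨i', p0, p', h1, h2, hsub0⟩ := hqle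
  obtain ⟨hii', hp0⟩ := ZFSet.pair_injective h1
  subst hii'
  have hp'PS : IsPS omega1 S p' := hiQinv q p' hqQ h2
  -- construct the sealing condition
  obtain ⟨u, hruQ, hrule, αs, βs, hmem, hαδ, hβδ⟩ :
      ∃ u : ZFSet,
        IsQ omega1 S₀ S₁ (ZFSet.pair i u) ∧
        QleQ (ZFSet.pair i u) q ∧
        ∃ αs βs : ZFSet, ZFSet.pair αs βs ∈ u ∧ αs ∈ δ ∧ (∀ x ∈ δ, x ∈ βs) := by
    by_cases hseal : ∃ a b : ZFSet, ZFSet.pair a b ∈ p' ∧ a ∈ δ ∧ (δ ∈ b ∨ δ = b)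
    · obtain ⟨a, b, hab, haδ, hb⟩ := hseal
      refine ⟨p', h2 ▸ hqQ, ⟨i, p', p', h2, rfl, fun z hz => hz⟩, a, b, hab, haδ, ?_⟩
      intro x hx
      obtain ⟨-, hbω, -⟩ := PS_pair_facts hp'PS hab
      rcases hb with hb | hb
      · exact (ord_mem hω1 hbω).1 δ hb hx
      · exact hb ▸ hx
    · push_neg at hseal
      -- bound the second coordinates below δ
      set P : Set ZFSet := {b | ∃ a, ZFSet.pair a b ∈ p' ∧ b ∈ δ} with hPdef
      have hPfin : P.Finite := by
        refine Set.Finite.subset (field_finite hp'PS.1 (fun z hz => by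
          obtain ⟨a, _, b, _, _, heq⟩ := hp'PS.2.1 z hz
          exact ⟨a, b, heq⟩)) ?_
        rintro b ⟨a, hab, hbδ⟩
        exact ⟨ZFSet.pair a b, hab, {a, b}, mem_snd_pair, ZFSet.mem_pair.2 (Or.inr rfl)⟩
      obtain ⟨γ, hγN, hγω, hγub⟩ := bound_in_N hω1 hω1unc hω1least (Nempty' hχ hHχ hN) hPfin
        (fun b hb => by obtain ⟨a, -, h⟩ := hb; exact h)
      obtain ⟨α, hαN, hαS, hγα, -⟩ := Nabove hχ hHχ hN hSN hγN (Nempty' hχ hHχ hN)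
        (by
          obtain ⟨c, hcS, hγc⟩ := stat_unbounded hω1 hω1unc hω1least hSstat hγω
          exact ⟨c, hcS, hγc, fun z hz => absurd hz (ZFSet.notMem_empty _)⟩)
      have hαω : α ∈ omega1 := hSstat.1 hαS
      have hαδ : α ∈ δ := hNEδ α hαω hαN
      have hbound : ∀ a b : ZFSet, ZFSet.pair a b ∈ p' → b ∈ δ → b ∈ α := by
        intro a b hab hbδ
        exact (ord_mem hω1 hαω).1 γ hγα (hγub b ⟨a, hab, hbδ⟩)
      have hsndδ : ∀ a b : ZFSet, ZFSet.pair a b ∈ p' → a ∈ δ → b ∈ δ := by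
        intro a b hab haδ
        obtain ⟨-, hbω, -⟩ := PS_pair_facts hp'PS hab
        rcases ord_tri b δ (ord_mem hω1 hbω) hδord with h | h | h
        · exact h
        · exact absurd h.symm (hseal a b hab haδ).2
        · exact absurd h (hseal a b hab haδ).1
      refine ⟨p' ∪ {ZFSet.pair α δ}, hiQmk _ ?_,
        ⟨i, p', p' ∪ {ZFSet.pair α δ}, h2, rfl, fun z hz => ZFSet.mem_union.2 (Or.inl hz)⟩,
        α, δ, ZFSet.mem_union.2 (Or.inr (ZFSet.mem_singleton.2 rfl)), hαδ, fun x hx => hx⟩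
      refine ⟨?_, ?_, ?_⟩
      · rw [ZFSet.toSet_union]
        refine hp'PS.1.union (Set.Finite.subset (Set.finite_singleton (ZFSet.pair α δ)) ?_)
        intro z hz
        have : z = ZFSet.pair α δ := ZFSet.mem_singleton.1 hz
        simp [this]
      · intro z hz
        rcases ZFSet.mem_union.1 hz with hz | hz
        · exact hp'PS.2.1 z hz
        · exact ⟨α, hαS, δ, hδω1, Or.inl hαδ, ZFSet.mem_singleton.1 hz⟩
      · intro x1 y1 x2 y2 hm1 hm2
        rintro ⟨hx12, hy⟩
        rcases ZFSet.mem_union.1 hm1 with hm1 | hm1 <;>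
          rcases ZFSet.mem_union.1 hm2 with hm2 | hm2
        · exact hp'PS.2.2 x1 y1 x2 y2 hm1 hm2 ⟨hx12, hy⟩
        · obtain ⟨e1, e2⟩ := ZFSet.pair_injective (ZFSet.mem_singleton.1 hm2)
          rw [e1] at hx12 hy
          -- hx12 : x1 ∈ α, hy : α ∈ y1 ∨ α = y1
          have hx1δ : x1 ∈ δ := hδord.1 α hαδ hx12
          have hy1δ : y1 ∈ δ := hsndδ x1 y1 hm1 hx1δ
          have hy1α : y1 ∈ α := hbound x1 y1 hm1 hy1δ
          rcases hy with hy | hy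
          · exact ZFSet.mem_asymm hy hy1α
          · exact ZFSet.mem_irrefl y1 (hy ▸ hy1α)
        · obtain ⟨e1, e2⟩ := ZFSet.pair_injective (ZFSet.mem_singleton.1 hm1)
          rw [e1] at hx12
          rw [e2] at hy
          -- hx12 : α ∈ x2, hy : x2 ∈ δ ∨ x2 = δ
          obtain ⟨hx2S, hy2ω, hx2y2⟩ := PS_pair_facts hp'PS hm2
          rcases hy with hy | hy
          · have hy2δ : y2 ∈ δ := hsndδ x2 y2 hm2 hy
            have hy2α : y2 ∈ α := hbound x2 y2 hm2 hy2δ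
            rcases hx2y2 with h | h
            · exact ZFSet.mem_asymm ((ord_mem hω1 hy2ω).1 x2 h hx12) hy2α
            · exact ZFSet.mem_asymm (h ▸ hx12) hy2α
          · exact hδS (hy ▸ hx2S)
        · obtain ⟨e1, e2⟩ := ZFSet.pair_injective (ZFSet.mem_singleton.1 hm1)
          obtain ⟨e3, e4⟩ := ZFSet.pair_injective (ZFSet.mem_singleton.1 hm2)
          rw [e1, e3] at hx12
          exact ZFSet.mem_irrefl _ hx12
  -- the dense set
  obtain ⟨c₀, hc₀, hαc₀⟩ := ZFSet.mem_sUnion.1 hαδ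
  obtain ⟨hc₀ω, hc₀N⟩ := zinter_mem.1 hc₀
  set D : Set ZFSet := {d | (IsQ omega1 S₀ S₁ d ∧ d ∈ N) ∧
    ∀ s, d = ZFSet.pair i s → ∃ a b : ZFSet, ZFSet.pair a b ∈ s ∧ c₀ ∈ a ∧ a ∈ δ} with hDdef
  have hD1 : ∀ d ∈ D, IsQ omega1 S₀ S₁ d ∧ d ∈ N := fun d hd => hd.1
  have hdense : ∀ p, IsQ omega1 S₀ S₁ p → p ∈ N → ∃ d ∈ D, QleQ d p := by
    intro p hpQ hpN
    by_cases hform : ∃ s, p = ZFSet.pair i s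
    · obtain ⟨s, hps⟩ := hform
      have hsPS : IsPS omega1 S s := hiQinv p s hpQ hps
      have hsN : s ∈ N := (Nunpair hχ hHχ hN hpN hps).2
      -- get a suitable c' ∈ N ∩ S
      have hex : ∃ c, c ∈ S ∧ c₀ ∈ c ∧ ∀ z ∈ s, ∀ w ∈ z, ∀ u ∈ w, u ∈ c := by
        have hTfin : ({u : ZFSet | ∃ z ∈ s.toSet, ∃ w ∈ z.toSet, u ∈ w} ∪ {c₀}).Finite :=
          (field_finite hsPS.1 (fun z hz => by
            obtain ⟨a, _, b, _, _, heq⟩ := hsPS.2.1 z hz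
            exact ⟨a, b, heq⟩)).union (Set.finite_singleton c₀)
        have hTsub : ∀ x ∈ ({u : ZFSet | ∃ z ∈ s.toSet, ∃ w ∈ z.toSet, u ∈ w} ∪ {c₀}), x ∈ omega1 := by
          rintro x (⟨z, hz, w, hw, hx⟩ | hx)
          · obtain ⟨a, haS, b, hbω, -, heq⟩ := hsPS.2.1 z hz
            have hw' : w ∈ ZFSet.pair a b := heq ▸ hw
            rcases pair_mem_iff.1 hw' with rfl | rfl
            · have : x = a := ZFSet.mem_singleton.1 hx
              exact this ▸ hSstat.1 haS
            · rcases ZFSet.mem_pair.1 hx with rfl | rfl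
              · exact hSstat.1 haS
              · exact hbω
          · have : x = c₀ := hx
            exact this ▸ hc₀ω
        obtain ⟨m, hmω, hmub⟩ := finite_ub hω1 hω1unc hω1least hTfin hTsub
        obtain ⟨c, hcS, hmc⟩ := stat_unbounded hω1 hω1unc hω1least hSstat hmω
        have hcω : c ∈ omega1 := hSstat.1 hcS
        refine ⟨c, hcS, ?_, ?_⟩
        · exact (ord_mem hω1 hcω).1 m hmc (hmub c₀ (Or.inr rfl))
        · intro z hz w hw x hx
          exact (ord_mem hω1 hcω).1 m hmc (hmub x (Or.inl ⟨z, hz, w, hw, hx⟩))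
      obtain ⟨c', hc'N, hc'S, hc₀c', hc'b⟩ := Nabove hχ hHχ hN hSN hc₀N hsN hex
      have hc'ω : c' ∈ omega1 := hSstat.1 hc'S
      have hnew : ∀ a b : ZFSet, ZFSet.pair a b ∈ s → a ∈ c' ∧ b ∈ c' := by
        intro a b hab
        exact ⟨hc'b _ hab _ mem_fst_pair _ (ZFSet.mem_singleton.2 rfl),
          hc'b _ hab _ mem_snd_pair _ (ZFSet.mem_pair.2 (Or.inr rfl))⟩
      refine ⟨ZFSet.pair i (s ∪ {ZFSet.pair c' c'}), ⟨⟨hiQmk _ ?_, ?_⟩, ?_⟩,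
        ⟨i, s, s ∪ {ZFSet.pair c' c'}, hps, rfl, fun z hz => ZFSet.mem_union.2 (Or.inl hz)⟩⟩
      · -- IsPS of the extension
        refine ⟨?_, ?_, ?_⟩
        · rw [ZFSet.toSet_union]
          refine hsPS.1.union (Set.Finite.subset (Set.finite_singleton (ZFSet.pair c' c')) ?_)
          intro z hz
          have : z = ZFSet.pair c' c' := ZFSet.mem_singleton.1 hz
          simp [this]
        · intro z hz
          rcases ZFSet.mem_union.1 hz with hz | hz
          · exact hsPS.2.1 z hz
          · exact ⟨c', hc'S, c', hc'ω, Or.inr rfl, ZFSet.mem_singleton.1 hz⟩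
        · intro x1 y1 x2 y2 hm1 hm2
          rintro ⟨hx12, hy⟩
          rcases ZFSet.mem_union.1 hm1 with hm1 | hm1 <;>
            rcases ZFSet.mem_union.1 hm2 with hm2 | hm2
          · exact hsPS.2.2 x1 y1 x2 y2 hm1 hm2 ⟨hx12, hy⟩
          · obtain ⟨e1, e2⟩ := ZFSet.pair_injective (ZFSet.mem_singleton.1 hm2)
            rw [e1] at hx12 hy
            have hy1c : y1 ∈ c' := (hnew x1 y1 hm1).2
            rcases hy with hy | hy
            · exact ZFSet.mem_asymm hy hy1c
            · exact ZFSet.mem_irrefl y1 (hy ▸ hy1c)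
          · obtain ⟨e1, e2⟩ := ZFSet.pair_injective (ZFSet.mem_singleton.1 hm1)
            rw [e1] at hx12
            exact ZFSet.mem_asymm hx12 (hnew x2 y2 hm2).1
          · obtain ⟨e1, e2⟩ := ZFSet.pair_injective (ZFSet.mem_singleton.1 hm1)
            obtain ⟨e3, e4⟩ := ZFSet.pair_injective (ZFSet.mem_singleton.1 hm2)
            rw [e1, e3] at hx12
            exact ZFSet.mem_irrefl _ hx12
      · -- d ∈ N
        exact NpairK hχ hHχ hN hiN
          (Nunion hχ hHχ hN hsN (Nsingleton hχ hHχ hN (NpairK hχ hHχ hN hc'N hc'N)))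
      · -- the witness condition
        intro s' heq
        obtain ⟨-, hX⟩ := ZFSet.pair_injective heq
        refine ⟨c', c', hX ▸ ZFSet.mem_union.2 (Or.inr (ZFSet.mem_singleton.2 rfl)), hc₀c', ?_⟩
        exact hNEδ c' hc'ω hc'N
    · refine ⟨p, ⟨⟨hpQ, hpN⟩, fun s hs => absurd ⟨s, hs⟩ hform⟩, ?_⟩
      rcases hpQ with ⟨s₂, hc | hc⟩
      · exact ⟨∅, s₂, s₂, hc.1, hc.1, fun z hz => hz⟩
      · exact ⟨{∅}, s₂, s₂, hc.1, hc.1, fun z hz => hz⟩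
  -- apply strong genericity to get a contradiction
  obtain ⟨d, hdD, r'', hr''Q, hle1, hle2⟩ := hSG D hD1 hdense (ZFSet.pair i u) hruQ hrule
  obtain ⟨i₁, pa, pb, hra, hrb, hab⟩ := hle1
  obtain ⟨e1, e2⟩ := ZFSet.pair_injective hra
  subst e1
  subst e2
  obtain ⟨i₂, pc, pd, hda, hdb, hcd⟩ := hle2
  obtain ⟨e3, e4⟩ := ZFSet.pair_injective (hrb.symm.trans hdb)
  subst e3
  subst e4
  obtain ⟨a'', b'', habm, hc₀a, haδ2⟩ := hdD.2 pc hda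
  have hpbPS : IsPS omega1 S pb := hiQinv r'' pb hr''Q hrb
  have hm1 : ZFSet.pair αs βs ∈ pb := hab hmem
  have hm2 : ZFSet.pair a'' b'' ∈ pb := hcd habm
  refine hpbPS.2.2 αs βs a'' b'' hm1 hm2 ⟨?_, Or.inl (hβδ a'' haδ2)⟩
  exact (ord_mem hω1 (hδsub a'' haδ2)).1 c₀ hc₀a hαc₀

end Stmt17
/-- let `S₀` and `S₁` be disjoint stationary subsets of `ω₁` and
`Q` the disjoint sum of the club-shooting posets `P_{S₀}` and `P_{S₁}`.  Then
`Q` is not strongly proper on a stationary set: for every countable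
`N ≺ H(χ)` containing the relevant parameters `ω₁, S₀, S₁`, there is
`i ∈ {0,1}` such that the condition `(i, ∅)` has no strongly `N`-generic
extension. -/
theorem stmt_17 (omega1 : ZFSet) (hω1 : IsOrd omega1)
    (hω1unc : ¬ omega1.toSet.Countable)
    (hω1least : ∀ α ∈ omega1, ZFSet.toSet α |>.Countable)
    (S₀ S₁ : ZFSet)
    (hstat₀ : StationaryIn omega1 S₀) (hstat₁ : StationaryIn omega1 S₁)
    (hdisj : zinter S₀ S₁ = ∅)
    (χ : Cardinal.{1}) (hχ : Cardinal.aleph0 < χ)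
    (Hχ : ZFSet)
    (hHχ : ∀ x : ZFSet, x ∈ Hχ ↔
      ∃ t : ZFSet, t.IsTransitive ∧ x ⊆ t ∧ Cardinal.mk t.toSet < χ)
    (N : ZFSet) (hNc : N.toSet.Countable) (hN : ElemSub N Hχ)
    (hω1N : omega1 ∈ N) (hS₀N : S₀ ∈ N) (hS₁N : S₁ ∈ N) :
    ∃ i : ZFSet, (i = ∅ ∨ i = {∅}) ∧
      ¬ ∃ q : ZFSet, IsQ omega1 S₀ S₁ q ∧ QleQ q (ZFSet.pair i ∅) ∧
        StronglyGenericQ omega1 S₀ S₁ N q := by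
  classical
  by_cases h0 : ZFSet.sUnion (zinter omega1 N) ∈ S₀
  · have h1 : ZFSet.sUnion (zinter omega1 N) ∉ S₁ := by
      intro h
      have hmem : ZFSet.sUnion (zinter omega1 N) ∈ zinter S₀ S₁ :=
        Stmt17.zinter_mem.2 ⟨h0, h⟩
      rw [hdisj] at hmem
      exact ZFSet.notMem_empty _ hmem
    refine ⟨{∅}, Or.inr rfl, ?_⟩
    refine Stmt17.main_side omega1 hω1 hω1unc hω1least S₀ S₁ hχ hHχ hNc hN hω1N
      {∅} S₁ (Stmt17.Nsingleton hχ hHχ hN (Stmt17.Nempty' hχ hHχ hN)) hstat₁ hS₁N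
      (fun p hp => ⟨p, Or.inr ⟨rfl, hp⟩⟩) ?_ h1
    intro q p hq heq
    obtain ⟨p', hc | hc⟩ := hq
    · exact absurd (ZFSet.pair_injective (heq.symm.trans hc.1)).1.symm Stmt17.empty_ne_sing
    · obtain ⟨e1, e2⟩ := ZFSet.pair_injective (heq.symm.trans hc.1)
      rw [e2]
      exact hc.2
  · refine ⟨∅, Or.inl rfl, ?_⟩
    refine Stmt17.main_side omega1 hω1 hω1unc hω1least S₀ S₁ hχ hHχ hNc hN hω1N
      ∅ S₀ (Stmt17.Nempty' hχ hHχ hN) hstat₀ hS₀N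
      (fun p hp => ⟨p, Or.inl ⟨rfl, hp⟩⟩) ?_ h0
    intro q p hq heq
    obtain ⟨p', hc | hc⟩ := hq
    · obtain ⟨e1, e2⟩ := ZFSet.pair_injective (heq.symm.trans hc.1)
      rw [e2]
      exact hc.2
    · exact absurd (ZFSet.pair_injective (heq.symm.trans hc.1)).1 Stmt17.empty_ne_sing
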